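/- Let n, m, N, K ≥ 1 and let Ξ = {ξ ∈ ℝⁿ : Hξ ≤ d} with H ∈ ℝ^{m×n}, d ∈ ℝᵐ. Let ξ̂₁, …, ξ̂_N ∈ Ξ and let P̂ = (1/N) Σᵢ δ_{ξ̂ᵢ} be the empirical distribution. Let Q be a probability measure supported on Ξ with finite first moment, let ε ≥ 0, and suppose d_W(P̂, Q) ≤ ε, where d_W is the dual-form Wasserstein distance with respect to the ℓ¹ norm. Suppose given vectors a_k ∈ ℝⁿ and scalars b_k ∈ ℝ for k = 1, …, K, a scalar λ ≥ 0, scalars s₁, …, s_N ∈ ℝ, and vectors ς_{ik} ∈ ℝᵐ with nonnegative entries such that for all i ≤ N and k ≤ K: b_k + ⟨a_k, ξ̂ᵢ⟩ + ⟨ς_{ik}, d − Hξ̂ᵢ⟩ ≤ sᵢ and ‖Hᵀς_{ik} − a_k‖_∞ ≤ λ. Then ∫_Ξ max_{k≤K} (⟨a_k, ξ⟩ + b_k) dQ(ξ) ≤ λ·ε + (1/N) Σ_{i=1}^N sᵢ. -/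

import Mathlib

open MeasureTheory
open scoped ENNReal

/-- Euclidean inner (dot) product on `ℝⁿ`. -/
def dotp {n : ℕ} (a b : Fin n → ℝ) : ℝ := ∑ i, a i * b i

/-- The ℓ¹ norm on `ℝⁿ`. -/
def l1norm {n : ℕ} (x : Fin n → ℝ) : ℝ := ∑ i, |x i|

/-- The ℓ∞ (supremum) norm on `ℝⁿ`. -/
noncomputable def linfnorm {n : ℕ} (x : Fin n → ℝ) : ℝ := ⨆ i, |x i|

/-- `f` is Lipschitz with constant 1 with respect to the ℓ¹ norm. -/
def LipschitzL1 {n : ℕ} (f : (Fin n → ℝ) → ℝ) : Prop :=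
  ∀ x y, |f x - f y| ≤ l1norm (x - y)

/-- Dual-form Wasserstein distance with respect to the ℓ¹ norm. -/
noncomputable def wassersteinL1 {n : ℕ} (Q₁ Q₂ : Measure (Fin n → ℝ)) : ℝ :=
  sSup {r : ℝ | ∃ f : (Fin n → ℝ) → ℝ,
    LipschitzL1 f ∧ r = (∫ ξ, f ξ ∂Q₁) - (∫ ξ, f ξ ∂Q₂)}

section aux
variable {n : ℕ}

lemma l1norm_nonneg (x : Fin n → ℝ) : 0 ≤ l1norm x :=
  Finset.sum_nonneg fun _ _ => abs_nonneg _

lemma abs_apply_le_linfnorm (x : Fin n → ℝ) (i : Fin n) : |x i| ≤ linfnorm x :=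
  le_ciSup (f := fun j => |x j|) (Set.Finite.bddAbove (Set.finite_range _)) i

lemma abs_dotp_le (x y : Fin n → ℝ) : |dotp x y| ≤ linfnorm x * l1norm y := by
  have h1 : |dotp x y| ≤ ∑ i, |x i| * |y i| := by
    simpa [dotp, abs_mul] using Finset.abs_sum_le_sum_abs (fun i => x i * y i) Finset.univ
  refine h1.trans ?_
  rw [l1norm, Finset.mul_sum]
  exact Finset.sum_le_sum fun i _ =>
    mul_le_mul_of_nonneg_right (abs_apply_le_linfnorm x i) (abs_nonneg _)

lemma dotp_mulVec {m : ℕ} (H : Matrix (Fin m) (Fin n) ℝ) (ς : Fin m → ℝ) (x : Fin n → ℝ) :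
    dotp ς (H.mulVec x) = dotp (H.transpose.mulVec ς) x := by
  simp only [dotp, Matrix.mulVec, dotProduct, Matrix.transpose_apply,
    Finset.mul_sum, Finset.sum_mul]
  rw [Finset.sum_comm]
  apply Finset.sum_congr rfl; intro i _
  apply Finset.sum_congr rfl; intro j _
  ring

lemma dotp_sub (x y z : Fin n → ℝ) : dotp x (y - z) = dotp x y - dotp x z := by
  simp only [dotp, Pi.sub_apply, mul_sub, Finset.sum_sub_distrib]

lemma dotp_sub_left (x y z : Fin n → ℝ) : dotp (x - y) z = dotp x z - dotp y z := by
  simp only [dotp, Pi.sub_apply, sub_mul, Finset.sum_sub_distrib]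

lemma l1norm_sub_abs (x y c : Fin n → ℝ) :
    |l1norm (x - c) - l1norm (y - c)| ≤ l1norm (x - y) := by
  have key : ∀ u v : Fin n → ℝ, l1norm (u - c) - l1norm (v - c) ≤ l1norm (u - v) := by
    intro u v
    rw [l1norm, l1norm, l1norm, ← Finset.sum_sub_distrib]
    refine Finset.sum_le_sum fun i _ => ?_
    have := abs_sub_abs_le_abs_sub ((u - c) i) ((v - c) i)
    simpa [sub_sub_sub_cancel_right] using this
  rw [abs_sub_le_iff]
  constructor
  · exact key x y
  · have := key y x
    have h2 : l1norm (y - x) = l1norm (x - y) := by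
      rw [l1norm, l1norm]
      exact Finset.sum_congr rfl fun i _ => by
        simp only [Pi.sub_apply, abs_sub_comm]
    linarith
end aux

section aux2
variable {n : ℕ}

lemma aux_ciInf_le_ciInf_add {ι : Type*} [Finite ι] [Nonempty ι] (f g : ι → ℝ) (c : ℝ)
    (h : ∀ i, f i ≤ g i + c) : (⨅ i, f i) ≤ (⨅ i, g i) + c := by
  obtain ⟨i0, hi0⟩ := Finite.exists_min g
  have hg : (⨅ i, g i) = g i0 :=
    le_antisymm (ciInf_le (Set.Finite.bddBelow (Set.finite_range g)) i0) (le_ciInf hi0)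
  calc (⨅ i, f i) ≤ f i0 := ciInf_le (Set.Finite.bddBelow (Set.finite_range f)) i0
    _ ≤ g i0 + c := h i0
    _ = (⨅ i, g i) + c := by rw [hg]

lemma aux_ciSup_le_ciSup_add {ι : Type*} [Finite ι] [Nonempty ι] (f g : ι → ℝ) (c : ℝ)
    (h : ∀ i, f i ≤ g i + c) : (⨆ i, f i) ≤ (⨆ i, g i) + c :=
  ciSup_le fun i => (h i).trans
    (add_le_add_left (le_ciSup (Set.Finite.bddAbove (Set.finite_range g)) i) c)

lemma aux_l1norm_le_dist (x y : Fin n → ℝ) : l1norm (x - y) ≤ n * dist x y := by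
  have : ∀ i, |(x - y) i| ≤ dist x y := by
    intro i
    have := dist_le_pi_dist x y i
    simpa [Real.dist_eq] using this
  calc l1norm (x - y) ≤ ∑ _i : Fin n, dist x y := Finset.sum_le_sum fun i _ => this i
    _ = n * dist x y := by simp [Finset.sum_const, nsmul_eq_mul]

lemma aux_continuous_of_lip {f : (Fin n → ℝ) → ℝ} {C : ℝ}
    (hf : ∀ x y, |f x - f y| ≤ C * l1norm (x - y)) (hC : 0 ≤ C) : Continuous f := by
  have : LipschitzWith (Real.toNNReal (C * n)) f := by
    apply LipschitzWith.of_dist_le_mul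
    intro x y
    rw [Real.dist_eq, Real.coe_toNNReal _ (by positivity)]
    calc |f x - f y| ≤ C * l1norm (x - y) := hf x y
      _ ≤ C * (n * dist x y) := by
          exact mul_le_mul_of_nonneg_left (aux_l1norm_le_dist x y) hC
      _ = C * n * dist x y := by ring
  exact this.continuous

lemma aux_abs_le_of_lip {f : (Fin n → ℝ) → ℝ} {C : ℝ}
    (hf : ∀ x y, |f x - f y| ≤ C * l1norm (x - y)) (ξ : Fin n → ℝ) :
    |f ξ| ≤ |f 0| + C * l1norm ξ := by
  have h := hf ξ 0
  have h0 : l1norm (ξ - (0 : Fin n → ℝ)) = l1norm ξ := by simp [l1norm]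
  rw [h0] at h
  calc |f ξ| = |f 0 + (f ξ - f 0)| := by ring_nf
    _ ≤ |f 0| + |f ξ - f 0| := abs_add_le _ _
    _ ≤ |f 0| + C * l1norm ξ := by linarith

lemma aux_integrable_of_lip {f : (Fin n → ℝ) → ℝ} {C : ℝ}
    (hf : ∀ x y, |f x - f y| ≤ C * l1norm (x - y)) (hC : 0 ≤ C)
    (Q : Measure (Fin n → ℝ)) [IsProbabilityMeasure Q]
    (hQmom : Integrable (fun ξ => l1norm ξ) Q) : Integrable f Q := by
  refine Integrable.mono' ((integrable_const (|f 0|)).add (hQmom.const_mul C))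
    (aux_continuous_of_lip hf hC).aestronglyMeasurable ?_
  filter_upwards with ξ
  simpa [Real.norm_eq_abs] using aux_abs_le_of_lip hf ξ

lemma aux_integral_empirical {N : ℕ} (hN : 1 ≤ N) (ξhat : Fin N → Fin n → ℝ)
    (f : (Fin n → ℝ) → ℝ) (hf : Measurable f) :
    (∫ ξ, f ξ ∂((N : ℝ≥0∞)⁻¹ • ∑ i, Measure.dirac (ξhat i)))
      = (1 / (N : ℝ)) * ∑ i, f (ξhat i) := by
  rw [integral_smul_measure, integral_finset_sum_measure (fun i _ =>
    (integrable_const (f (ξhat i))).congr (ae_eq_dirac f).symm)]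
  simp only [integral_dirac]
  simp [ENNReal.toReal_inv, smul_eq_mul, one_div]
end aux2
lemma aux_l1norm_sub_comm {n : ℕ} (x y : Fin n → ℝ) : l1norm (x - y) = l1norm (y - x) := by
  rw [l1norm, l1norm]
  exact Finset.sum_congr rfl fun i _ => by simp only [Pi.sub_apply, abs_sub_comm]

lemma aux_linfnorm_nonneg {n : ℕ} [Nonempty (Fin n)] (x : Fin n → ℝ) : 0 ≤ linfnorm x :=
  (abs_nonneg _).trans (abs_apply_le_linfnorm x (Classical.arbitrary _))


/-- Soundness (weak duality) of the tractable finite convex reformulation of the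
distributionally robust stochastic OPF: any feasible point `(λ, sᵢ, ς_{ik})` of the
quadratic program certifies that `λε + (1/N)Σᵢ sᵢ` upper-bounds the expectation of the
piecewise-affine CVaR integrand under any distribution `Q` supported on the polytope `Ξ`
within Wasserstein distance `ε` of the empirical distribution of the samples. -/
theorem drso_reformulation_sound {n m N K : ℕ}
    (hn : 1 ≤ n) (hm : 1 ≤ m) (hN : 1 ≤ N) (hK : 1 ≤ K)
    (H : Matrix (Fin m) (Fin n) ℝ) (d : Fin m → ℝ)
    (ξhat : Fin N → Fin n → ℝ)
    (hξhat : ∀ i j, H.mulVec (ξhat i) j ≤ d j)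
    (Q : Measure (Fin n → ℝ)) [IsProbabilityMeasure Q]
    (hQsupp : ∀ᵐ ξ ∂Q, ∀ j, H.mulVec ξ j ≤ d j)
    (hQmom : Integrable (fun ξ => l1norm ξ) Q)
    (ε : ℝ) (hε : 0 ≤ ε)
    (hW : wassersteinL1 ((N : ℝ≥0∞)⁻¹ • ∑ i, Measure.dirac (ξhat i)) Q ≤ ε)
    (a : Fin K → Fin n → ℝ) (b : Fin K → ℝ)
    (lam : ℝ) (hlam : 0 ≤ lam) (s : Fin N → ℝ)
    (ς : Fin N → Fin K → Fin m → ℝ) (hς : ∀ i k j, 0 ≤ ς i k j)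
    (hfeas1 : ∀ i k,
      b k + dotp (a k) (ξhat i) + dotp (ς i k) (d - H.mulVec (ξhat i)) ≤ s i)
    (hfeas2 : ∀ i k, linfnorm (H.transpose.mulVec (ς i k) - a k) ≤ lam) :
    (∫ ξ, (⨆ k : Fin K, dotp (a k) ξ + b k) ∂Q) ≤ lam * ε + (1 / N) * ∑ i, s i := by
  haveI hne_n : Nonempty (Fin n) := ⟨⟨0, hn⟩⟩
  haveI hne_N : Nonempty (Fin N) := ⟨⟨0, hN⟩⟩
  haveI hne_K : Nonempty (Fin K) := ⟨⟨0, hK⟩⟩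
  have hN0 : (0 : ℝ) < N := by exact_mod_cast hN
  set P : Measure (Fin n → ℝ) := (N : ℝ≥0∞)⁻¹ • ∑ i, Measure.dirac (ξhat i) with hP
  set F : (Fin n → ℝ) → ℝ := fun ξ => ⨅ i, (s i + lam * l1norm (ξ - ξhat i)) with hFdef
  set g : (Fin n → ℝ) → ℝ := fun ξ => ⨆ k, (dotp (a k) ξ + b k) with hgdef
  -- Lipschitz bound for F
  have hFlip1 : ∀ x y, F x ≤ F y + lam * l1norm (x - y) := by
    intro x y
    apply aux_ciInf_le_ciInf_add
    intro i
    have h1 : l1norm (x - ξhat i) ≤ l1norm (y - ξhat i) + l1norm (x - y) := by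
      have := (abs_le.mp (l1norm_sub_abs x y (ξhat i))).2
      linarith
    have := mul_le_mul_of_nonneg_left h1 hlam
    linarith
  have hFlip : ∀ x y, |F x - F y| ≤ lam * l1norm (x - y) := by
    intro x y
    rw [abs_sub_le_iff]
    refine ⟨by linarith [hFlip1 x y], ?_⟩
    have := hFlip1 y x
    rw [aux_l1norm_sub_comm y x] at this
    linarith
  -- Lipschitz bound for g
  set Cg : ℝ := ∑ k, linfnorm (a k) with hCgdef
  have hCg0 : 0 ≤ Cg := Finset.sum_nonneg fun k _ => aux_linfnorm_nonneg (a k)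
  have hCgk : ∀ k, linfnorm (a k) ≤ Cg := fun k =>
    Finset.single_le_sum (fun k _ => aux_linfnorm_nonneg (a k)) (Finset.mem_univ k)
  have hglip1 : ∀ x y, g x ≤ g y + Cg * l1norm (x - y) := by
    intro x y
    apply aux_ciSup_le_ciSup_add
    intro k
    have h1 : dotp (a k) x - dotp (a k) y ≤ Cg * l1norm (x - y) := by
      rw [← dotp_sub]
      calc dotp (a k) (x - y) ≤ |dotp (a k) (x - y)| := le_abs_self _
        _ ≤ linfnorm (a k) * l1norm (x - y) := abs_dotp_le _ _
        _ ≤ Cg * l1norm (x - y) :=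
            mul_le_mul_of_nonneg_right (hCgk k) (l1norm_nonneg _)
    linarith
  have hglip : ∀ x y, |g x - g y| ≤ Cg * l1norm (x - y) := by
    intro x y
    rw [abs_sub_le_iff]
    refine ⟨by linarith [hglip1 x y], ?_⟩
    have := hglip1 y x
    rw [aux_l1norm_sub_comm y x] at this
    linarith
  -- Integrability
  have hFint : Integrable F Q := aux_integrable_of_lip hFlip hlam Q hQmom
  have hgint : Integrable g Q := aux_integrable_of_lip hglip hCg0 Q hQmom
  -- Pointwise domination on the polytope
  have hdom : ∀ ξ, (∀ j, H.mulVec ξ j ≤ d j) → g ξ ≤ F ξ := by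
    intro ξ hξ
    refine le_ciInf fun i => ciSup_le fun k => ?_
    have key1 : 0 ≤ dotp (ς i k) (d - H.mulVec ξ) :=
      Finset.sum_nonneg fun j _ =>
        mul_nonneg (hς i k j) (by simpa using sub_nonneg.mpr (hξ j))
    have key2 := hfeas1 i k
    have key3 : |dotp (H.transpose.mulVec (ς i k) - a k) (ξ - ξhat i)|
        ≤ lam * l1norm (ξ - ξhat i) :=
      (abs_dotp_le _ _).trans
        (mul_le_mul_of_nonneg_right (hfeas2 i k) (l1norm_nonneg _))
    have key3' := (abs_le.mp key3).1
    have e1 : dotp (a k) ξ + b k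
        = (b k + dotp (a k) (ξhat i) + dotp (ς i k) (d - H.mulVec (ξhat i)))
          - dotp (ς i k) (d - H.mulVec ξ)
          - dotp (H.transpose.mulVec (ς i k) - a k) (ξ - ξhat i) := by
      simp only [dotp_sub, dotp_sub_left, ← dotp_mulVec]
      ring
    linarith
  have hQle : (∫ ξ, g ξ ∂Q) ≤ ∫ ξ, F ξ ∂Q :=
    integral_mono_ae hgint hFint (hQsupp.mono fun ξ hξ => hdom ξ hξ)
  -- empirical integral of F
  have hFmeas : Measurable F := (aux_continuous_of_lip hFlip hlam).measurable
  have hFP : (∫ ξ, F ξ ∂P) = (1 / (N : ℝ)) * ∑ i, F (ξhat i) :=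
    aux_integral_empirical hN ξhat F hFmeas
  have hFi : ∀ i, F (ξhat i) ≤ s i := by
    intro i
    have h0 : l1norm ((0 : Fin n → ℝ)) = 0 := by simp [l1norm]
    have hle := ciInf_le (Set.Finite.bddBelow (Set.finite_range
      (fun j => s j + lam * l1norm (ξhat i - ξhat j)))) i
    rw [hFdef]
    simpa [h0] using hle
  have hFPle : (∫ ξ, F ξ ∂P) ≤ (1 / (N : ℝ)) * ∑ i, s i := by
    rw [hFP]
    exact mul_le_mul_of_nonneg_left (Finset.sum_le_sum fun i _ => hFi i) (by positivity)
  -- the Wasserstein set and its boundedness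
  set S : Set ℝ := {r : ℝ | ∃ f : (Fin n → ℝ) → ℝ,
    LipschitzL1 f ∧ r = (∫ ξ, f ξ ∂P) - (∫ ξ, f ξ ∂Q)} with hSdef
  have hWS : sSup S ≤ ε := hW
  have hSbdd : BddAbove S := by
    refine ⟨(1 / (N : ℝ)) * (∑ i, l1norm (ξhat i)) + ∫ ξ, l1norm ξ ∂Q, ?_⟩
    rintro r ⟨f, hf, rfl⟩
    have hf' : ∀ x y, |f x - f y| ≤ 1 * l1norm (x - y) := by
      intro x y; simpa using hf x y
    have hfc := aux_continuous_of_lip hf' zero_le_one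
    have hfint : Integrable f Q := aux_integrable_of_lip hf' zero_le_one Q hQmom
    have h1 : (∫ ξ, f ξ ∂P) ≤ f 0 + (1 / (N : ℝ)) * ∑ i, l1norm (ξhat i) := by
      rw [aux_integral_empirical hN ξhat f hfc.measurable]
      have hstep : ∀ i, f (ξhat i) ≤ f 0 + l1norm (ξhat i) := by
        intro i
        have h2 := (abs_le.mp (hf (ξhat i) 0)).2
        have h3 : l1norm (ξhat i - 0) = l1norm (ξhat i) := by simp [l1norm]
        rw [h3] at h2
        linarith
      calc (1 / (N : ℝ)) * ∑ i, f (ξhat i)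
          ≤ (1 / (N : ℝ)) * ∑ i, (f 0 + l1norm (ξhat i)) :=
            mul_le_mul_of_nonneg_left (Finset.sum_le_sum fun i _ => hstep i) (by positivity)
        _ = f 0 + (1 / (N : ℝ)) * ∑ i, l1norm (ξhat i) := by
            rw [Finset.sum_add_distrib, Finset.sum_const, Finset.card_univ, Fintype.card_fin,
              nsmul_eq_mul]
            field_simp
    have h2 : f 0 - (∫ ξ, l1norm ξ ∂Q) ≤ ∫ ξ, f ξ ∂Q := by
      have hmono : ∀ ξ, f 0 - l1norm ξ ≤ f ξ := by
        intro ξ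
        have h2 := (abs_le.mp (hf (0 : Fin n → ℝ) ξ)).2
        have h3 : l1norm ((0 : Fin n → ℝ) - ξ) = l1norm ξ := by simp [l1norm]
        rw [h3] at h2
        linarith
      have := integral_mono ((integrable_const (f 0)).sub hQmom) hfint
        (fun ξ => hmono ξ)
      simp only [Pi.sub_apply] at this
      rwa [integral_sub (integrable_const (f 0)) hQmom, integral_const, probReal_univ,
        smul_eq_mul, one_mul] at this
    linarith
  -- key Wasserstein estimate
  have hWkey : (∫ ξ, F ξ ∂Q) - (∫ ξ, F ξ ∂P) ≤ lam * ε := by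
    rcases eq_or_lt_of_le hlam with hlam0 | hlam0
    · -- lam = 0 : F is constant
      have hFc : F = fun _ => ⨅ i, s i := by
        funext ξ
        rw [hFdef]
        simp [← hlam0]
      rw [hFc, aux_integral_empirical hN ξhat _ measurable_const, integral_const,
        probReal_univ, smul_eq_mul, one_mul, Finset.sum_const,
        Finset.card_univ, Fintype.card_fin, nsmul_eq_mul, ← hlam0]
      have : (1 / (N : ℝ)) * ((N : ℝ) * (⨅ i, s i)) = ⨅ i, s i := by
        field_simp
      rw [this]
      simp
    · -- lam > 0
      have hr : ((∫ ξ, F ξ ∂Q) - ∫ ξ, F ξ ∂P) / lam ≤ ε := by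
        have hmem : ((∫ ξ, F ξ ∂Q) - ∫ ξ, F ξ ∂P) / lam ∈ S := by
          refine ⟨fun ξ => -(F ξ / lam), ?_, ?_⟩
          · intro x y
            have h1 : -(F x / lam) - -(F y / lam) = (F y - F x) / lam := by ring
            rw [h1, abs_div, abs_of_pos hlam0, div_le_iff₀ hlam0]
            have := hFlip y x
            rw [aux_l1norm_sub_comm y x] at this
            linarith [this]
          · rw [integral_neg, integral_neg, integral_div, integral_div]
            ring
        exact le_trans (le_csSup hSbdd hmem) hWS
      have := (div_le_iff₀ hlam0).mp hr
      linarith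
  linarith
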